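/- Let r ∈ O be monic. For every a = (a1,a2) ∈ O² with |a| < |r| and gcd(a1,a2,r) = 1, there exists exactly one pair (d, c) with d ∈ O monic, d ∣ r, c = (c1,c2) ∈ O² primitive, |d·c1| ≤ |r|^{1/2} and |d·c2| < |r|^{1/2}, such that a/r lies on the generalised line L(d·c). -/
import Mathlib


set_option autoImplicit false

noncomputable section

open Polynomial Matrix
open scoped Classical

variable {Fq : Type} [Field Fq] [Fintype Fq]

/-- The absolute value on `O = Fq[t]`: `|x| = q ^ deg x` for `x ≠ 0`, and `|0| = 0`. -/
def Oabs (x : Fq[X]) : ℝ := if x = 0 then 0 else (Fintype.card Fq : ℝ) ^ x.natDegree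

/-- The maximum norm on pairs of polynomials. -/
def Oabs2 (a : Fq[X] × Fq[X]) : ℝ := max (Oabs a.1) (Oabs a.2)

/-- A pair `c = (c₁, c₂)` is primitive if `gcd(c₁,c₂) = 1` and either `c₁` is monic,
or `c₁ = 0` and `c₂` is monic. -/
def Primitive (c : Fq[X] × Fq[X]) : Prop :=
  IsCoprime c.1 c.2 ∧ (c.1.Monic ∨ (c.1 = 0 ∧ c.2.Monic))

/-- `gcd(a, b, r) = 1`: every common divisor of `a`, `b` and `r` is a unit. -/
def CoprimeTriple (a b r : Fq[X]) : Prop :=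
  ∀ p : Fq[X], p ∣ a → p ∣ b → p ∣ r → IsUnit p

/-- `a/r` lies on the generalised line `L(d·c)`: there is `k` with
`d(c₁a₁ + c₂a₂) = k·r` and `gcd(d,k) = 1`. -/
def OnLine (d : Fq[X]) (c : Fq[X] × Fq[X]) (r : Fq[X]) (a : Fq[X] × Fq[X]) : Prop :=
  ∃ k : Fq[X], d * (c.1 * a.1 + c.2 * a.2) = k * r ∧ IsCoprime d k

set_option linter.unusedSectionVars false

lemma card_one_lt : (1:ℝ) < (Fintype.card Fq : ℝ) := by
  exact_mod_cast Fintype.one_lt_card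

lemma Oabs_le_sqrt_iff (r x : Fq[X]) (hr : r ≠ 0) :
    Oabs x ≤ Real.sqrt (Oabs r) ↔ (x = 0 ∨ 2 * x.natDegree ≤ r.natDegree) := by
  have hq : (1:ℝ) < (Fintype.card Fq : ℝ) := card_one_lt
  have hq0 : (0:ℝ) < (Fintype.card Fq : ℝ) := lt_trans one_pos hq
  rcases eq_or_ne x 0 with h | h
  · simp [Oabs, h, Real.sqrt_nonneg]
  · simp only [Oabs, if_neg h, if_neg hr, h, false_or, if_false]
    rw [Real.le_sqrt (by positivity) (by positivity), ← pow_mul, mul_comm x.natDegree 2,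
      pow_le_pow_iff_right₀ hq]

lemma Oabs_lt_sqrt_iff (r x : Fq[X]) (hr : r ≠ 0) :
    Oabs x < Real.sqrt (Oabs r) ↔ (x = 0 ∨ 2 * x.natDegree < r.natDegree) := by
  have hq : (1:ℝ) < (Fintype.card Fq : ℝ) := card_one_lt
  rcases eq_or_ne x 0 with h | h
  · simp only [Oabs, if_neg hr, if_pos h, h, true_or, iff_true]
    exact Real.sqrt_pos.mpr (by positivity)
  · simp only [Oabs, if_neg h, if_neg hr, h, false_or, if_false]
    rw [Real.lt_sqrt (by positivity), ← pow_mul, mul_comm x.natDegree 2,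
      pow_lt_pow_iff_right₀ hq]

lemma pigeon (r : Fq[X]) (hr : r.Monic) (a1 a2 : Fq[X]) :
    ∃ b : Fq[X] × Fq[X], b ≠ 0 ∧ (b.1 ∈ degreeLT Fq (r.natDegree / 2 + 1)) ∧
      (b.2 ∈ degreeLT Fq ((r.natDegree + 1) / 2)) ∧ r ∣ (b.1 * a1 + b.2 * a2) := by
  set n := r.natDegree
  set s := n / 2 + 1
  set t := (n + 1) / 2
  have hst : s + t = n + 1 := by omega
  have hr0 : r ≠ 0 := hr.ne_zero
  -- the linear map
  let ψ : Fq[X] × Fq[X] →ₗ[Fq] Fq[X] :=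
    (modByMonicHom r).comp (((LinearMap.mulRight Fq a1).coprod (LinearMap.mulRight Fq a2)))
  let incl : ↥(degreeLT Fq s) × ↥(degreeLT Fq t) →ₗ[Fq] Fq[X] × Fq[X] :=
    ((degreeLT Fq s).subtype).prodMap ((degreeLT Fq t).subtype)
  have hmem : ∀ x : ↥(degreeLT Fq s) × ↥(degreeLT Fq t), (ψ.comp incl) x ∈ degreeLT Fq n := by
    intro x
    rw [mem_degreeLT]
    calc ((ψ.comp incl) x).degree < r.degree := degree_modByMonic_lt _ hr
    _ = (n : WithBot ℕ) := (degree_eq_natDegree hr0)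
  let φ : ↥(degreeLT Fq s) × ↥(degreeLT Fq t) →ₗ[Fq] ↥(degreeLT Fq n) :=
    LinearMap.codRestrict _ (ψ.comp incl) hmem
  haveI : Module.Finite Fq ↥(degreeLT Fq s) := Module.Finite.equiv (degreeLTEquiv Fq s).symm
  haveI : Module.Finite Fq ↥(degreeLT Fq t) := Module.Finite.equiv (degreeLTEquiv Fq t).symm
  haveI : Module.Finite Fq ↥(degreeLT Fq n) := Module.Finite.equiv (degreeLTEquiv Fq n).symm
  have hφ : ¬ Function.Injective φ := by
    intro hinj
    have := LinearMap.finrank_le_finrank_of_injective hinj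
    rw [Module.finrank_prod, (degreeLTEquiv Fq s).finrank_eq, (degreeLTEquiv Fq t).finrank_eq,
      (degreeLTEquiv Fq n).finrank_eq, Module.finrank_fin_fun, Module.finrank_fin_fun,
      Module.finrank_fin_fun] at this
    omega
  rw [Function.not_injective_iff] at hφ
  obtain ⟨x, y, hxy, hne⟩ := hφ
  refine ⟨((x.1 : Fq[X]) - (y.1 : Fq[X]), (x.2 : Fq[X]) - (y.2 : Fq[X])), ?_, ?_, ?_, ?_⟩
  · intro h
    apply hne
    rw [Prod.ext_iff] at h ⊢
    obtain ⟨h1, h2⟩ := h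
    constructor
    · exact Subtype.ext (by rw [← sub_eq_zero]; exact h1)
    · exact Subtype.ext (by rw [← sub_eq_zero]; exact h2)
  · exact (degreeLT Fq s).sub_mem x.1.2 y.1.2
  · exact (degreeLT Fq t).sub_mem x.2.2 y.2.2
  · have : ψ (incl x) = ψ (incl y) := congrArg Subtype.val hxy
    have h2 : ψ (incl x - incl y) = 0 := by rw [map_sub, this, sub_self]
    have h3 : (((x.1:Fq[X]) - (y.1:Fq[X])) * a1 + ((x.2:Fq[X]) - (y.2:Fq[X])) * a2) %ₘ r = 0 := h2
    exact (modByMonic_eq_zero_iff_dvd hr).mp h3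

lemma monic_C_inv_mul (p : Fq[X]) (hp : p ≠ 0) : (C (p.leadingCoeff)⁻¹ * p).Monic := by
  have h : p.leadingCoeff ≠ 0 := leadingCoeff_ne_zero.mpr hp
  unfold Monic
  rw [leadingCoeff_mul, leadingCoeff_C, inv_mul_cancel₀ h]

lemma primitive_scale (c1 c2 : Fq[X]) (h : IsCoprime c1 c2) :
    ∃ w : Fq[X], IsUnit w ∧ Primitive (w * c1, w * c2) := by
  rcases eq_or_ne c1 0 with h1 | h1
  · have hu : IsUnit c2 := isCoprime_zero_left.mp (h1 ▸ h)
    have h2 : c2 ≠ 0 := hu.ne_zero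
    refine ⟨C (c2.leadingCoeff)⁻¹, ?_, ?_, ?_⟩
    · exact isUnit_C.mpr (IsUnit.inv (isUnit_iff_ne_zero.mpr (leadingCoeff_ne_zero.mpr h2)))
    · exact (isCoprime_mul_unit_left
        (isUnit_C.mpr (IsUnit.inv (isUnit_iff_ne_zero.mpr (leadingCoeff_ne_zero.mpr h2)))) _ _).mpr h
    · right
      exact ⟨by simp [h1], monic_C_inv_mul c2 h2⟩
  · refine ⟨C (c1.leadingCoeff)⁻¹, ?_, ?_, ?_⟩
    · exact isUnit_C.mpr (IsUnit.inv (isUnit_iff_ne_zero.mpr (leadingCoeff_ne_zero.mpr h1)))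
    · exact (isCoprime_mul_unit_left
        (isUnit_C.mpr (IsUnit.inv (isUnit_iff_ne_zero.mpr (leadingCoeff_ne_zero.mpr h1)))) _ _).mpr h
    · left
      exact monic_C_inv_mul c1 h1

lemma gcd_monic (p q : Fq[X]) (h : p ≠ 0) : (gcd p q).Monic := by
  have h1 : gcd p q ≠ 0 := gcd_ne_zero_of_left h
  have h2 : normalize (gcd p q) = gcd p q := normalize_gcd p q
  have := monic_normalize (p := gcd p q) h1
  rwa [h2] at this

-- quotient of monics is monic
lemma monic_of_mul_monic (e d : Fq[X]) (he : e.Monic) (hede : (e * d).Monic) : d.Monic := by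
  have h : (e*d).leadingCoeff = 1 := hede
  rw [leadingCoeff_mul, he.leadingCoeff, one_mul] at h
  exact h

lemma coprime_of_gcd_factor (g x y : Fq[X]) (hg : g.Monic) (hgcd : gcd (g*x) (g*y) = g) :
    IsCoprime x y := by
  have he : g ≠ 0 := hg.ne_zero
  have h : gcd (g*x) (g*y) = g * gcd x y := by
    rw [gcd_mul_left, hg.normalize_eq_self]
  rw [hgcd] at h
  have : g * 1 = g * gcd x y := by rw [mul_one]; exact h
  have h1 : gcd x y = 1 := (mul_left_cancel₀ he this).symm
  exact (gcd_isUnit_iff x y).mp (h1 ▸ isUnit_one)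

lemma split_coprime (g m : Fq[X]) (hg : g.Monic) :
    ∃ e d k : Fq[X], e.Monic ∧ d.Monic ∧ g = e * d ∧ m = e * k ∧ IsCoprime d k := by
  set e := gcd g m with hedef
  have he : e.Monic := gcd_monic g m hg.ne_zero
  obtain ⟨d, hd⟩ : e ∣ g := gcd_dvd_left g m
  obtain ⟨k, hk⟩ : e ∣ m := gcd_dvd_right g m
  refine ⟨e, d, k, he, monic_of_mul_monic e d he (hd ▸ hg), hd, hk, ?_⟩
  apply coprime_of_gcd_factor e d k he
  rw [← hd, ← hk]

lemma existence0 (r : Fq[X]) (hr : r.Monic) (a : Fq[X] × Fq[X]) :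
    ∃ dc : Fq[X] × (Fq[X] × Fq[X]),
      dc.1.Monic ∧ dc.1 ∣ r ∧ Primitive dc.2 ∧
      (dc.1 * dc.2.1 = 0 ∨ 2 * (dc.1 * dc.2.1).natDegree ≤ r.natDegree) ∧
      (dc.1 * dc.2.2 = 0 ∨ 2 * (dc.1 * dc.2.2).natDegree < r.natDegree) ∧
      OnLine dc.1 dc.2 r a := by
  set n := r.natDegree with hn
  obtain ⟨b, hb0, hb1, hb2, hdvd⟩ := pigeon r hr a.1 a.2
  set g := gcd b.1 b.2 with hgdef
  have hg0 : g ≠ 0 := by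
    intro h
    rw [hgdef, gcd_eq_zero_iff] at h
    exact hb0 (Prod.ext h.1 h.2)
  have hgm : g.Monic := by
    have := monic_normalize (p := g) hg0
    rwa [normalize_gcd] at this
  obtain ⟨c1', hc1'⟩ : g ∣ b.1 := gcd_dvd_left b.1 b.2
  obtain ⟨c2', hc2'⟩ : g ∣ b.2 := gcd_dvd_right b.1 b.2
  have hcop : IsCoprime c1' c2' := by
    apply coprime_of_gcd_factor g c1' c2' hgm
    rw [← hc1', ← hc2']
  obtain ⟨w, hw, hprim⟩ := primitive_scale c1' c2' hcop
  have hw0 : w ≠ 0 := hw.ne_zero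
  have hdvd2 : r ∣ g * ((w * c1') * a.1 + (w * c2') * a.2) := by
    have : g * ((w * c1') * a.1 + (w * c2') * a.2) = w * (b.1 * a.1 + b.2 * a.2) := by
      rw [hc1', hc2']; ring
    rw [this]
    exact Dvd.dvd.mul_left hdvd w
  obtain ⟨m, hm⟩ : ∃ m, g * ((w * c1') * a.1 + (w * c2') * a.2) = m * r := by
    obtain ⟨m, hm⟩ := hdvd2; exact ⟨m, by rw [hm, mul_comm]⟩
  obtain ⟨e, d, k, he, hd, hge, hme, hcop2⟩ := split_coprime g m hgm
  have he0 : e ≠ 0 := he.ne_zero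
  have heq : d * ((w * c1') * a.1 + (w * c2') * a.2) = k * r := by
    apply mul_left_cancel₀ he0
    rw [← mul_assoc, ← hge, hm, hme, mul_assoc]
  have hdr : d ∣ r := hcop2.dvd_of_dvd_mul_left ⟨_, heq.symm⟩
  have hdg : d ∣ g := Dvd.intro_left e hge.symm
  -- degree bounds
  have bound : ∀ (ci' bi : Fq[X]) (s : ℕ), bi = g * ci' → bi ∈ degreeLT Fq s →
      d * (w * ci') = 0 ∨ (d * (w * ci')).natDegree < s := by
    intro ci' bi s hbi hmem
    rcases eq_or_ne ci' 0 with h0 | h0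
    · left; rw [h0]; ring
    · right
      have hbi0 : bi ≠ 0 := by rw [hbi]; exact mul_ne_zero hg0 h0
      have hwbi0 : w * bi ≠ 0 := mul_ne_zero hw0 hbi0
      have hdvd3 : d * (w * ci') ∣ w * bi := ⟨e, by rw [hbi, hge]; ring⟩
      have h4 : (d * (w * ci')).natDegree ≤ (w * bi).natDegree := natDegree_le_of_dvd hdvd3 hwbi0
      have h5 : (w * bi).natDegree = bi.natDegree := by
        rw [natDegree_mul hw0 hbi0, natDegree_eq_zero_of_isUnit hw, zero_add]
      have h6 : bi.natDegree < s := (natDegree_lt_iff_degree_lt hbi0).mpr (mem_degreeLT.mp hmem)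
      omega
  have A1 := bound c1' b.1 (n/2+1) hc1' hb1
  have A2 := bound c2' b.2 ((n+1)/2) hc2' hb2
  refine ⟨(d, (w * c1', w * c2')), hd, hdr, hprim, ?_, ?_, ⟨k, heq, hcop2⟩⟩
  · rcases A1 with h | h
    · left; exact h
    · right; show 2 * (d * (w * c1')).natDegree ≤ r.natDegree; omega
  · rcases A2 with h | h
    · left; exact h
    · right; show 2 * (d * (w * c2')).natDegree < r.natDegree; omega

lemma triple_dvd (r D a1 a2 : Fq[X]) (hr : r.Monic) (hco : CoprimeTriple a1 a2 r)
    (h1 : r ∣ D * a1) (h2 : r ∣ D * a2) : r ∣ D := by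
  have hr0 : r ≠ 0 := hr.ne_zero
  set g0 := gcd r D with hg0def
  have hg00 : g0 ≠ 0 := gcd_ne_zero_of_left hr0
  have hg0m : g0.Monic := by have := monic_normalize (p := g0) hg00; rwa [normalize_gcd] at this
  obtain ⟨s, hs⟩ : g0 ∣ r := gcd_dvd_left r D
  obtain ⟨D0, hD0⟩ : g0 ∣ D := gcd_dvd_right r D
  have hcop : IsCoprime s D0 := by
    apply coprime_of_gcd_factor g0 s D0 hg0m; rw [← hs, ← hD0]
  have hs1 : s ∣ a1 := by
    apply hcop.dvd_of_dvd_mul_left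
    have : g0 * s ∣ g0 * (D0 * a1) := by
      rw [← hs]; convert h1 using 1; rw [hD0]; ring
    exact (mul_dvd_mul_iff_left hg00).mp this
  have hs2 : s ∣ a2 := by
    apply hcop.dvd_of_dvd_mul_left
    have : g0 * s ∣ g0 * (D0 * a2) := by
      rw [← hs]; convert h2 using 1; rw [hD0]; ring
    exact (mul_dvd_mul_iff_left hg00).mp this
  have hsr : s ∣ r := Dvd.intro_left g0 hs.symm
  obtain ⟨u, hu⟩ := hco s hs1 hs2 hsr
  have hrg0 : r ∣ g0 := ⟨(↑u⁻¹ : Fq[X]ˣ), by rw [hs, ← hu, mul_assoc, Units.mul_inv, mul_one]⟩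
  exact hrg0.trans ⟨D0, hD0⟩

lemma prim_eq (c c' : Fq[X] × Fq[X]) (hc : Primitive c) (hc' : Primitive c')
    (h : c.1 * c'.2 = c.2 * c'.1) : c = c' := by
  obtain ⟨hcop, hm⟩ := hc
  obtain ⟨hcop', hm'⟩ := hc'
  obtain ⟨x, y, hxy⟩ := hcop
  obtain ⟨x', y', hxy'⟩ := hcop'
  have d11 : c.1 ∣ c'.1 := ⟨x * c'.1 + y * c'.2, by
    have := congrArg (· * c'.1) hxy
    simp only [one_mul] at this
    calc c'.1 = (x * c.1 + y * c.2) * c'.1 := this.symm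
    _ = x * (c.1 * c'.1) + y * (c.2 * c'.1) := by ring
    _ = x * (c.1 * c'.1) + y * (c.1 * c'.2) := by rw [← h]
    _ = c.1 * (x * c'.1 + y * c'.2) := by ring⟩
  have d11' : c'.1 ∣ c.1 := ⟨x' * c.1 + y' * c.2, by
    calc c.1 = (x' * c'.1 + y' * c'.2) * c.1 := by rw [hxy', one_mul]
    _ = x' * (c'.1 * c.1) + y' * (c'.2 * c.1) := by ring
    _ = x' * (c'.1 * c.1) + y' * (c'.1 * c.2) := by
          congr 1
          rw [mul_comm c'.2 c.1, h, mul_comm c.2 c'.1]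
    _ = c'.1 * (x' * c.1 + y' * c.2) := by ring⟩
  rcases eq_or_ne c.1 0 with h10 | h10
  · have h10' : c'.1 = 0 := by
      rw [h10] at d11; exact zero_dvd_iff.mp d11
    have hm2 : c.2.Monic := by
      rcases hm with hmon | ⟨_, hmon⟩
      · exact absurd h10 hmon.ne_zero
      · exact hmon
    have hm2' : c'.2.Monic := by
      rcases hm' with hmon | ⟨_, hmon⟩
      · exact absurd h10' hmon.ne_zero
      · exact hmon
    -- c.2 ∣ c'.2 and back
    have d22 : c.2 ∣ c'.2 := ⟨x * c'.1 + y * c'.2, by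
      calc c'.2 = (x * c.1 + y * c.2) * c'.2 := by rw [hxy, one_mul]
      _ = x * (c.1 * c'.2) + y * (c.2 * c'.2) := by ring
      _ = x * (c.2 * c'.1) + y * (c.2 * c'.2) := by rw [h]
      _ = c.2 * (x * c'.1 + y * c'.2) := by ring⟩
    have d22' : c'.2 ∣ c.2 := ⟨x' * c.1 + y' * c.2, by
      calc c.2 = (x' * c'.1 + y' * c'.2) * c.2 := by rw [hxy', one_mul]
      _ = x' * (c'.1 * c.2) + y' * (c'.2 * c.2) := by ring
      _ = x' * (c'.2 * c.1) + y' * (c'.2 * c.2) := by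
            congr 1
            rw [mul_comm c'.1 c.2, ← h, mul_comm c.1 c'.2]
      _ = c'.2 * (x' * c.1 + y' * c.2) := by ring⟩
    have : c.2 = c'.2 := eq_of_monic_of_associated hm2 hm2' (associated_of_dvd_dvd d22 d22')
    exact Prod.ext (h10.trans h10'.symm) this
  · have hm1 : c.1.Monic := by
      rcases hm with hmon | ⟨h0, _⟩
      · exact hmon
      · exact absurd h0 h10
    have h10' : c'.1 ≠ 0 := by
      intro h0
      rw [h0] at d11'; exact h10 (zero_dvd_iff.mp d11')
    have hm1' : c'.1.Monic := by
      rcases hm' with hmon | ⟨h0, _⟩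
      · exact hmon
      · exact absurd h0 h10'
    have he1 : c.1 = c'.1 := eq_of_monic_of_associated hm1 hm1' (associated_of_dvd_dvd d11 d11')
    have he2 : c.2 = c'.2 := by
      apply mul_left_cancel₀ h10
      rw [mul_comm c.1 c.2, h, he1, mul_comm]
    exact Prod.ext he1 he2

lemma uniq_main (r : Fq[X]) (hr : r.Monic) (a : Fq[X] × Fq[X]) (hco : CoprimeTriple a.1 a.2 r)
    (d d' : Fq[X]) (c c' : Fq[X] × Fq[X]) (hd : d.Monic) (hd' : d'.Monic)
    (hc : Primitive c) (hc' : Primitive c')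
    (hb1 : d * c.1 = 0 ∨ 2 * (d * c.1).natDegree ≤ r.natDegree)
    (hb2 : d * c.2 = 0 ∨ 2 * (d * c.2).natDegree < r.natDegree)
    (hb1' : d' * c'.1 = 0 ∨ 2 * (d' * c'.1).natDegree ≤ r.natDegree)
    (hb2' : d' * c'.2 = 0 ∨ 2 * (d' * c'.2).natDegree < r.natDegree)
    (hl : OnLine d c r a) (hl' : OnLine d' c' r a) : (d, c) = (d', c') := by
  obtain ⟨k, hk, hdk⟩ := hl
  obtain ⟨k', hk', hdk'⟩ := hl'
  have hr0 : r ≠ 0 := hr.ne_zero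
  set D : Fq[X] := (d * c.1) * (d' * c'.2) - (d * c.2) * (d' * c'.1) with hDdef
  have hra1 : r ∣ D * a.1 := ⟨(d' * c'.2) * k - (d * c.2) * k', by
    rw [hDdef]; linear_combination (d' * c'.2) * hk - (d * c.2) * hk'⟩
  have hra2 : r ∣ D * a.2 := ⟨(d * c.1) * k' - (d' * c'.1) * k, by
    rw [hDdef]; linear_combination (d * c.1) * hk' - (d' * c'.1) * hk⟩
  have hrD := triple_dvd r D a.1 a.2 hr hco hra1 hra2
  have key : ∀ u v : Fq[X], (u = 0 ∨ 2 * u.natDegree ≤ r.natDegree) →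
      (v = 0 ∨ 2 * v.natDegree < r.natDegree) →
      u * v = 0 ∨ ((u * v).natDegree < r.natDegree ∧ 1 ≤ r.natDegree) := by
    intro u v hu hv
    rcases eq_or_ne u 0 with h0 | h0
    · left; rw [h0, zero_mul]
    rcases eq_or_ne v 0 with h0' | h0'
    · left; rw [h0', mul_zero]
    right
    have hu2 := hu.resolve_left h0
    have hv2 := hv.resolve_left h0'
    rw [natDegree_mul h0 h0']
    omega
  have hD0 : D = 0 := by
    by_contra hne
    have hnd : r.natDegree ≤ D.natDegree := natDegree_le_of_dvd hrD hne
    have h1 := key (d * c.1) (d' * c'.2) hb1 hb2'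
    have h2 := key (d' * c'.1) (d * c.2) hb1' hb2
    have hsub : D.natDegree ≤ max ((d * c.1) * (d' * c'.2)).natDegree
        ((d * c.2) * (d' * c'.1)).natDegree := by
      rw [hDdef]; exact natDegree_sub_le _ _
    have hcomm : ((d * c.2) * (d' * c'.1)).natDegree = ((d' * c'.1) * (d * c.2)).natDegree := by
      rw [mul_comm]
    rcases h1 with h1 | h1 <;> rcases h2 with h2 | h2
    · apply hne; rw [hDdef, h1, mul_comm (d * c.2) (d' * c'.1), h2, sub_zero]
    · rw [h1, natDegree_zero] at hsub
      rw [hcomm] at hsub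
      omega
    · rw [mul_comm (d * c.2) (d' * c'.1), h2, natDegree_zero] at hsub
      omega
    · rw [hcomm] at hsub
      omega
  have hDeq : (d * c.1) * (d' * c'.2) = (d * c.2) * (d' * c'.1) := by
    have := sub_eq_zero.mp hD0
    exact this
  have hprop : c.1 * c'.2 = c.2 * c'.1 := by
    apply mul_left_cancel₀ (mul_ne_zero hd.ne_zero hd'.ne_zero)
    linear_combination hDeq
  have hceq : c = c' := prim_eq c c' hc hc' hprop
  subst hceq
  rcases eq_or_ne (c.1 * a.1 + c.2 * a.2) 0 with hS | hS
  · rw [hS, mul_zero] at hk hk'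
    have hk0 : k = 0 := by
      rcases mul_eq_zero.mp hk.symm with h | h
      · exact h
      · exact absurd h hr0
    have hk0' : k' = 0 := by
      rcases mul_eq_zero.mp hk'.symm with h | h
      · exact h
      · exact absurd h hr0
    rw [hk0] at hdk; rw [hk0'] at hdk'
    have hu : IsUnit d := isCoprime_zero_right.mp hdk
    have hu' : IsUnit d' := isCoprime_zero_right.mp hdk'
    have e1 : d = 1 := hd.natDegree_eq_zero.mp (natDegree_eq_zero_of_isUnit hu)
    have e1' : d' = 1 := hd'.natDegree_eq_zero.mp (natDegree_eq_zero_of_isUnit hu')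
    rw [e1, e1']
  · have hkk : d' * k = d * k' := by
      apply mul_right_cancel₀ hr0
      calc d' * k * r = d' * (k * r) := by ring
      _ = d' * (d * (c.1 * a.1 + c.2 * a.2)) := by rw [hk]
      _ = d * (d' * (c.1 * a.1 + c.2 * a.2)) := by ring
      _ = d * (k' * r) := by rw [hk']
      _ = d * k' * r := by ring
    have hdd' : d ∣ d' := hdk.dvd_of_dvd_mul_right ⟨k', hkk⟩
    have hd'd : d' ∣ d := hdk'.dvd_of_dvd_mul_right ⟨k, hkk.symm⟩
    have : d = d' := eq_of_monic_of_associated hd hd' (associated_of_dvd_dvd hdd' hd'd)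
    rw [this]

/-- For `r` monic, every reduced rational point `a/r` lies on exactly one generalised
line `L(d·c)` with `d` monic, `d ∣ r`, `c` primitive, `|d·c₁| ≤ |r|^{1/2}` and
`|d·c₂| < |r|^{1/2}`. -/
theorem stmt_18 (Fq : Type) [Field Fq] [Fintype Fq]
    (r : Fq[X]) (hr : r.Monic)
    (a : Fq[X] × Fq[X]) (ha : Oabs2 a < Oabs r) (hco : CoprimeTriple a.1 a.2 r) :
    ∃! dc : Fq[X] × (Fq[X] × Fq[X]),
      dc.1.Monic ∧ dc.1 ∣ r ∧ Primitive dc.2 ∧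
      Oabs (dc.1 * dc.2.1) ≤ Real.sqrt (Oabs r) ∧
      Oabs (dc.1 * dc.2.2) < Real.sqrt (Oabs r) ∧
      OnLine dc.1 dc.2 r a := by
  have hr0 : r ≠ 0 := hr.ne_zero
  obtain ⟨dc, h1, h2, h3, h4, h5, h6⟩ := existence0 r hr a
  refine ⟨dc, ⟨h1, h2, h3, (Oabs_le_sqrt_iff r _ hr0).mpr h4,
    (Oabs_lt_sqrt_iff r _ hr0).mpr h5, h6⟩, ?_⟩
  rintro ⟨d', c'⟩ ⟨hd', hdr', hp', hb1', hb2', hl'⟩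
  have h := uniq_main r hr a hco d' dc.1 c' dc.2 hd' h1 hp' h3
    ((Oabs_le_sqrt_iff r _ hr0).mp hb1') ((Oabs_lt_sqrt_iff r _ hr0).mp hb2') h4 h5 hl' h6
  exact h.trans (Prod.mk.eta)
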